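/- Let α ∈ ℂ and let φ, ψ : ℂ → ℂ be entire functions with φ nowhere vanishing, satisfying ψ''(x) = (2x − 2ψ(x)φ(x))·ψ(x), φ''(x) = (2x − 2ψ(x)φ(x))·φ(x), and φ'(x)ψ(x) − φ(x)ψ'(x) = 2α for all x ∈ ℂ. Set z := −ψφ, u₀ := φ'/φ, and let C, D be the matrices C(x,t) = [[t²/4 − z/2 − x/2, −(φ/2)(t − u₀)], [−(1/φ)((u₀ + t)z/2 + α), −t²/4 + z/2 + x/2]], D(x,t) = [[−t/2, φ], [z/φ, t/2]]. Suppose Z₁, Z₂ : ℂ × ℂ → ℂ are differentiable in (x,t), satisfy ∂Z/∂t = CZ and ∂Z/∂x = DZ for Z = (Z₁, Z₂)ᵀ, and Z₁ is nowhere zero. Then G(x,t) := t·Z₂(x,t)/Z₁(x,t) satisfies both Riccati equations: t·∂G/∂x = −φG² + t²G − t²ψ, and 2t·∂G/∂t = −(φ' − tφ)G² + ((φ''/φ)t + 2 − t³)G + t²(ψ' + tψ), for all (x,t) ∈ ℂ². -/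

import Mathlib

/-- Matrix `C` of the isomonodromic system for Painlevé II with parameter `α`. -/
noncomputable def Cmat (α : ℂ) (φ z u : ℂ → ℂ) (x t : ℂ) : Matrix (Fin 2) (Fin 2) ℂ :=
  !![t ^ 2 / 4 - z x / 2 - x / 2, -(φ x / 2) * (t - u x);
     -(1 / φ x) * ((u x + t) * z x / 2 + α), -t ^ 2 / 4 + z x / 2 + x / 2]

/-- Matrix `D` of the isomonodromic system for Painlevé II with parameter `α`. -/
noncomputable def Dmat (φ z : ℂ → ℂ) (x t : ℂ) : Matrix (Fin 2) (Fin 2) ℂ :=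
  !![-t / 2, φ x;
     z x / φ x, t / 2]

/-- **Remark 2.9 (converse direction for `G`).** If `Z = (Z₁, Z₂)ᵀ` solves the
isomonodromic linear system `∂Z/∂t = CZ`, `∂Z/∂x = DZ` (with `z = −ψφ`, `u₀ = φ'/φ`)
and `Z₁` is nowhere zero, then `G = t·Z₂/Z₁` satisfies both Riccati equations
`t G_x = −φG² + t²G − t²ψ` and
`2t G_t = −(φ' − tφ)G² + ((φ''/φ)t + 2 − t³)G + t²(ψ' + tψ)`. -/
theorem linear_system_solution_gives_riccati_G
    (α : ℂ) (φ ψ : ℂ → ℂ) (hφ : Differentiable ℂ φ) (hψ : Differentiable ℂ ψ)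
    (hφ0 : ∀ x : ℂ, φ x ≠ 0)
    (hψ'' : ∀ x : ℂ, deriv (deriv ψ) x = (2 * x - 2 * ψ x * φ x) * ψ x)
    (hφ'' : ∀ x : ℂ, deriv (deriv φ) x = (2 * x - 2 * ψ x * φ x) * φ x)
    (hW : ∀ x : ℂ, deriv φ x * ψ x - φ x * deriv ψ x = 2 * α)
    (z u : ℂ → ℂ)
    (hz : z = fun x => -(ψ x * φ x))
    (hu : u = fun x => deriv φ x / φ x)
    (Z₁ Z₂ : ℂ → ℂ → ℂ)
    (hZ₁diff : Differentiable ℂ fun p : ℂ × ℂ => Z₁ p.1 p.2)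
    (hZ₂diff : Differentiable ℂ fun p : ℂ × ℂ => Z₂ p.1 p.2)
    (hZ₁t : ∀ x t : ℂ, deriv (fun s => Z₁ x s) t =
      Cmat α φ z u x t 0 0 * Z₁ x t + Cmat α φ z u x t 0 1 * Z₂ x t)
    (hZ₂t : ∀ x t : ℂ, deriv (fun s => Z₂ x s) t =
      Cmat α φ z u x t 1 0 * Z₁ x t + Cmat α φ z u x t 1 1 * Z₂ x t)
    (hZ₁x : ∀ x t : ℂ, deriv (fun y => Z₁ y t) x =
      Dmat φ z x t 0 0 * Z₁ x t + Dmat φ z x t 0 1 * Z₂ x t)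
    (hZ₂x : ∀ x t : ℂ, deriv (fun y => Z₂ y t) x =
      Dmat φ z x t 1 0 * Z₁ x t + Dmat φ z x t 1 1 * Z₂ x t)
    (hZ₁0 : ∀ x t : ℂ, Z₁ x t ≠ 0)
    (G : ℂ → ℂ → ℂ)
    (hG : ∀ x t : ℂ, G x t = t * Z₂ x t / Z₁ x t) :
    ∀ x t : ℂ,
      t * deriv (fun y => G y t) x = -φ x * (G x t) ^ 2 + t ^ 2 * G x t - t ^ 2 * ψ x
        ∧
      2 * t * deriv (fun s => G x s) t =
        -(deriv φ x - t * φ x) * (G x t) ^ 2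
          + ((deriv (deriv φ) x / φ x) * t + 2 - t ^ 3) * G x t
          + t ^ 2 * (deriv ψ x + t * ψ x) := by
  intro x t
  have hα : α = (deriv φ x * ψ x - φ x * deriv ψ x) / 2 := by
    linear_combination (-1/2 : ℂ) * hW x
  have hx1 : DifferentiableAt ℂ (fun y => Z₁ y t) x :=
    (hZ₁diff.comp (differentiable_id.prodMk (differentiable_const t))).differentiableAt
  have hx2 : DifferentiableAt ℂ (fun y => Z₂ y t) x :=
    (hZ₂diff.comp (differentiable_id.prodMk (differentiable_const t))).differentiableAt
  have ht1 : DifferentiableAt ℂ (fun s => Z₁ x s) t :=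
    (hZ₁diff.comp ((differentiable_const x).prodMk differentiable_id)).differentiableAt
  have ht2 : DifferentiableAt ℂ (fun s => Z₂ x s) t :=
    (hZ₂diff.comp ((differentiable_const x).prodMk differentiable_id)).differentiableAt
  have e1 : (fun y => G y t) = fun y => t * Z₂ y t / Z₁ y t := funext fun y => hG y t
  have e2 : (fun s => G x s) = fun s => s * Z₂ x s / Z₁ x s := funext fun s => hG x s
  have dGx : deriv (fun y => G y t) x =
      (t * deriv (fun y => Z₂ y t) x * Z₁ x t
        - t * Z₂ x t * deriv (fun y => Z₁ y t) x) / (Z₁ x t) ^ 2 := by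
    rw [e1, deriv_fun_div (c := fun y => t * Z₂ y t) ((differentiableAt_const t).mul hx2 : DifferentiableAt ℂ (fun y => t * Z₂ y t) x) hx1 (hZ₁0 x t),
      deriv_const_mul _ hx2]
  have dGt : deriv (fun s => G x s) t =
      ((Z₂ x t + t * deriv (fun s => Z₂ x s) t) * Z₁ x t
        - t * Z₂ x t * deriv (fun s => Z₁ x s) t) / (Z₁ x t) ^ 2 := by
    rw [e2, deriv_fun_div (c := fun s => s * Z₂ x s) (differentiableAt_id.mul ht2 : DifferentiableAt ℂ (fun s => s * Z₂ x s) t) ht1 (hZ₁0 x t),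
      deriv_fun_mul (c := fun s => s) differentiableAt_id ht2]
    simp
  constructor
  · rw [dGx, hZ₁x, hZ₂x, hG]
    simp only [Dmat, hz, Matrix.cons_val', Matrix.cons_val_zero, Matrix.cons_val_one,
      Matrix.head_cons, Matrix.head_fin_const, Matrix.empty_val', Matrix.cons_val_fin_one,
      Matrix.of_apply]
    field_simp [hφ0 x, hZ₁0 x t]
    ring
  · rw [dGt, hZ₁t, hZ₂t, hG, hφ'', hα]
    simp only [Cmat, hz, hu, Matrix.cons_val', Matrix.cons_val_zero, Matrix.cons_val_one,
      Matrix.head_cons, Matrix.head_fin_const, Matrix.empty_val', Matrix.cons_val_fin_one,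
      Matrix.of_apply]
    field_simp [hφ0 x, hZ₁0 x t]
    ring_nf
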